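/- Let M be a 2n×2n real anti-symplectic matrix, i.e., MᵀJM = −J where J is the standard symplectic matrix. If λ ∈ σ(M), then −λ⁻¹ ∈ σ(M), and the generalized eigenspaces satisfy dim ker(M − λ)^{2n} = dim ker(M + λ⁻¹)^{2n}; in particular λ and −λ⁻¹ have the same algebraic multiplicity. -/

import Mathlib

open Matrix

private lemma conj_pow_aux {α} [Monoid α] {P Q : α} (X : α) (h1 : P*Q = 1) (h2 : Q*P = 1)
    (k : ℕ) : (P*X*Q)^k = P * X^k * Q := by
  have h2' : ∀ y, Q*(P*y) = y := by intro y; rw [← mul_assoc, h2, one_mul]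
  induction k with
  | zero => simp [h1]
  | succ k ih => rw [pow_succ, pow_succ, ih]; simp [mul_assoc, h2']

private lemma key_aux {n : ℕ} (A : Matrix (Fin n ⊕ Fin n) (Fin n ⊕ Fin n) ℂ)
    (hAdet : IsUnit A.det)
    (hT : Aᵀ = J (Fin n) ℂ * A⁻¹ * J (Fin n) ℂ) (μ : ℂ) (hμ : μ ≠ 0) :
    Aᵀ - μ • 1 = J (Fin n) ℂ * ((-μ) • (A⁻¹ * (A + μ⁻¹ • 1))) * (-(J (Fin n) ℂ)) := by
  have hinv : A⁻¹ * A = 1 := nonsing_inv_mul A hAdet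
  have hJJ : J (Fin n) ℂ * J (Fin n) ℂ = -1 := J_squared (Fin n) ℂ
  have hexp : (-μ) • (A⁻¹ * (A + μ⁻¹ • 1)) = -(μ • 1) - A⁻¹ := by
    rw [mul_add, hinv, Matrix.mul_smul, mul_one, smul_add, smul_smul]
    rw [show -μ * μ⁻¹ = -1 by field_simp]
    simp [neg_smul, sub_eq_add_neg]
  rw [hexp, hT]
  simp only [Matrix.mul_sub, Matrix.sub_mul, Matrix.mul_neg, Matrix.neg_mul, Matrix.mul_smul,
    Matrix.smul_mul, mul_one, one_mul, neg_neg, smul_neg, mul_assoc, hJJ]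
  abel

/-- Let `M` be a real `2n×2n` anti-symplectic matrix (`MᵀJM = −J`).  If
`λ ∈ σ(M)` (complex spectrum, `λ ≠ 0`), then `−λ⁻¹ ∈ σ(M)`, and
`dim ker (M−λ)^{2n} = dim ker (M+λ⁻¹)^{2n}`; in particular `λ` and `−λ⁻¹` have the same
algebraic multiplicity. -/
theorem stmt8 {n : ℕ} (M : Matrix (Fin n ⊕ Fin n) (Fin n ⊕ Fin n) ℝ)
    (hM : Mᵀ * Matrix.J (Fin n) ℝ * M = -Matrix.J (Fin n) ℝ)
    (lam : ℂ) (hlam0 : lam ≠ 0)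
    (hlam : lam ∈ spectrum ℂ (M.map (algebraMap ℝ ℂ))) :
    (-lam⁻¹) ∈ spectrum ℂ (M.map (algebraMap ℝ ℂ)) ∧
      Module.finrank ℂ (LinearMap.ker
          (((M.map (algebraMap ℝ ℂ) - lam • 1) ^ (2 * n)).mulVecLin)) =
        Module.finrank ℂ (LinearMap.ker
          (((M.map (algebraMap ℝ ℂ) + lam⁻¹ • 1) ^ (2 * n)).mulVecLin)) := by
  set A := M.map (algebraMap ℝ ℂ) with hAdef
  set Jc := J (Fin n) ℂ with hJcdef
  have hJm : (J (Fin n) ℝ).map (algebraMap ℝ ℂ) = Jc := by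
    rw [hJcdef]
    ext (i|i) (j|j) <;>
      simp [Matrix.J, Matrix.map_apply, Matrix.one_apply, apply_ite (algebraMap ℝ ℂ)] <;>
      split <;> simp
  have hJ : Aᵀ * Jc * A = -Jc := by
    have h := congrArg (algebraMap ℝ ℂ).mapMatrix hM
    simp only [_root_.map_mul, _root_.map_neg, RingHom.mapMatrix_apply] at h
    rw [Matrix.transpose_map, hJm] at h
    exact h
  have hJdet : IsUnit Jc.det := isUnit_det_J (Fin n) ℂ
  have hcard : Fintype.card (Fin n ⊕ Fin n) = 2*n := by
    simp [Fintype.card_sum, two_mul]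
  have hJJ : Jc * Jc = -1 := J_squared (Fin n) ℂ
  have hAdet : IsUnit A.det := by
    have h := congrArg det hJ
    rw [det_mul, det_mul, det_transpose, det_neg, hcard,
      show ((-1:ℂ))^(2*n) = 1 by simp [pow_mul], one_mul] at h
    have hJ0 : Jc.det ≠ 0 := hJdet.ne_zero
    apply IsUnit.of_mul_eq_one (a := A.det) A.det
    have h2 : (A.det * A.det - 1) * Jc.det = 0 := by ring_nf; linear_combination h
    rcases mul_eq_zero.1 h2 with h3 | h3
    · linear_combination h3
    · exact absurd h3 hJ0
  have hAinv : A * A⁻¹ = 1 := mul_nonsing_inv A hAdet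
  have hAinv' : A⁻¹ * A = 1 := nonsing_inv_mul A hAdet
  have hT : Aᵀ = Jc * A⁻¹ * Jc := by
    have h1 : Aᵀ * Jc = -Jc * A⁻¹ := by
      have := congrArg (· * A⁻¹) hJ
      simpa [mul_assoc, hAinv, Matrix.neg_mul] using this
    calc Aᵀ = Aᵀ * (Jc * -Jc) := by rw [Matrix.mul_neg, hJJ, neg_neg, mul_one]
    _ = (Aᵀ * Jc) * -Jc := by rw [mul_assoc]
    _ = (-Jc * A⁻¹) * -Jc := by rw [h1]
    _ = Jc * A⁻¹ * Jc := by simp [Matrix.neg_mul, Matrix.mul_neg]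
  set B := A - lam • (1 : Matrix (Fin n ⊕ Fin n) (Fin n ⊕ Fin n) ℂ) with hBdef
  set C := A + lam⁻¹ • (1 : Matrix (Fin n ⊕ Fin n) (Fin n ⊕ Fin n) ℂ) with hCdef
  -- det B = 0 from hlam
  have hdetB : B.det = 0 := by
    rw [spectrum.mem_iff, Algebra.algebraMap_eq_smul_one] at hlam
    have h0 : (lam • 1 - A).det = 0 := by
      by_contra h
      exact hlam ((Matrix.isUnit_iff_isUnit_det _).2 (isUnit_iff_ne_zero.2 h))
    have : lam • (1 : Matrix (Fin n ⊕ Fin n) (Fin n ⊕ Fin n) ℂ) - A = -B := by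
      rw [hBdef, neg_sub]
    rw [this, det_neg, hcard] at h0
    simpa [pow_mul] using h0
  -- spectrum part
  have hdetC : C.det = 0 := by
    have hμ : (-lam⁻¹ : ℂ) ≠ 0 := by simpa using inv_ne_zero hlam0
    have hk := key_aux A hAdet hT (-lam⁻¹) hμ
    rw [show (-lam⁻¹ : ℂ)⁻¹ = -lam by rw [inv_neg, inv_inv], show A + (-lam) • (1 : Matrix (Fin n ⊕ Fin n) (Fin n ⊕ Fin n) ℂ) = B by rw [hBdef, neg_smul, ← sub_eq_add_neg]] at hk
    have h1 : (Aᵀ - (-lam⁻¹) • (1 : Matrix (Fin n ⊕ Fin n) (Fin n ⊕ Fin n) ℂ)).det = 0 := by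
      rw [hk]
      simp [det_mul, det_smul, det_neg, hdetB]
    have h2 : Aᵀ - (-lam⁻¹) • (1 : Matrix (Fin n ⊕ Fin n) (Fin n ⊕ Fin n) ℂ) = Cᵀ := by
      rw [hCdef, transpose_add, transpose_smul, transpose_one, neg_smul, sub_neg_eq_add]
    rw [h2, det_transpose] at h1
    exact h1
  have hspec : (-lam⁻¹) ∈ spectrum ℂ A := by
    rw [spectrum.mem_iff, Algebra.algebraMap_eq_smul_one]
    rw [show (-lam⁻¹) • (1 : Matrix (Fin n ⊕ Fin n) (Fin n ⊕ Fin n) ℂ) - A = -C by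
      rw [hCdef, neg_add, neg_smul, sub_eq_add_neg, add_comm]]
    rw [Matrix.isUnit_iff_isUnit_det, det_neg, hcard, hdetC]
    simp
  refine ⟨hspec, ?_⟩
  -- rank equality
  have hBT : Bᵀ = Jc * ((-lam) • (A⁻¹ * C)) * (-Jc) := by
    have := key_aux A hAdet hT lam hlam0
    rw [hBdef, transpose_sub, transpose_smul, transpose_one]
    exact this
  have hP : Jc * (-Jc) = 1 := by rw [Matrix.mul_neg, hJJ, neg_neg]
  have hQ : (-Jc) * Jc = 1 := by rw [Matrix.neg_mul, hJJ, neg_neg]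
  have hcomm : Commute A⁻¹ C := by
    have h1 : Commute A⁻¹ A := by unfold Commute SemiconjBy; rw [hAinv, hAinv']
    exact h1.add_right ((Commute.one_right A⁻¹).smul_right lam⁻¹)
  have hpow : (Bᵀ)^(2*n) = Jc * (((-lam)^(2*n)) • ((A⁻¹)^(2*n) * C^(2*n))) * (-Jc) := by
    rw [hBT, conj_pow_aux _ hP hQ, smul_pow, hcomm.mul_pow]
  have hrank : (B^(2*n)).rank = (C^(2*n)).rank := by
    have hnegJdet : IsUnit (-Jc).det := by
      rw [det_neg, hcard]
      simpa [pow_mul] using hJdet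
    have hsc : IsUnit (((-lam)^(2*n)) • (1 : Matrix (Fin n ⊕ Fin n) (Fin n ⊕ Fin n) ℂ)).det := by
      rw [det_smul, hcard, det_one, mul_one]
      exact isUnit_iff_ne_zero.2 (pow_ne_zero _ (pow_ne_zero _ (neg_ne_zero.2 hlam0)))
    have hAinvpow : IsUnit ((A⁻¹ ^ (2*n)).det) := by
      rw [det_pow]
      exact (Matrix.isUnit_nonsing_inv_det A hAdet).pow _
    calc (B^(2*n)).rank = ((B^(2*n))ᵀ).rank := (rank_transpose _).symm
    _ = ((Bᵀ)^(2*n)).rank := by rw [transpose_pow]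
    _ = (Jc * (((-lam)^(2*n)) • ((A⁻¹)^(2*n) * C^(2*n))) * (-Jc)).rank := by rw [hpow]
    _ = (Jc * (((-lam)^(2*n)) • ((A⁻¹)^(2*n) * C^(2*n)))).rank :=
      rank_mul_eq_left_of_isUnit_det _ _ hnegJdet
    _ = (((-lam)^(2*n)) • ((A⁻¹)^(2*n) * C^(2*n))).rank :=
      rank_mul_eq_right_of_isUnit_det _ _ hJdet
    _ = ((((-lam)^(2*n)) • (1 : Matrix (Fin n ⊕ Fin n) (Fin n ⊕ Fin n) ℂ)) * ((A⁻¹)^(2*n) * C^(2*n))).rank := by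
      rw [Matrix.smul_mul, one_mul]
    _ = ((A⁻¹)^(2*n) * C^(2*n)).rank := rank_mul_eq_right_of_isUnit_det _ _ hsc
    _ = (C^(2*n)).rank := rank_mul_eq_right_of_isUnit_det _ _ hAinvpow
  have key : ∀ D : Matrix (Fin n ⊕ Fin n) (Fin n ⊕ Fin n) ℂ,
      D.rank + Module.finrank ℂ (LinearMap.ker D.mulVecLin) = 2*n := by
    intro D
    have h := LinearMap.finrank_range_add_finrank_ker D.mulVecLin
    rw [Module.finrank_pi, hcard] at h
    rw [Matrix.rank]
    exact h
  have h1 := key (B^(2*n))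
  have h2 := key (C^(2*n))
  omega
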